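/- Suppose g : ℝ → ℂ is measurable and satisfies |g(k)| ≤ min( ⟨log|k|⟩, |k|^{−3} ) for all k ≠ 0. Then there is a universal constant C such that for every a ≥ 0: (i) ∫₀^∞ r |g(a + r)| dr ≤ C / ⟨a⟩, and (ii) ∫₀^∞ r |g(a − r)| dr ≤ C ⟨a⟩. -/

import Mathlib

open MeasureTheory Real Set Filter

noncomputable section

/-- Japanese bracket on ℝ. -/
def japR (t : ℝ) : ℝ := Real.sqrt (1 + t ^ 2)

def Fb (u : ℝ) : ℝ := if u ≤ 1 then 2 * u ^ (-(1:ℝ)/2) else u ^ (-(3:ℝ))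

lemma japR_le (t : ℝ) : japR t ≤ 1 + |t| := by
  rw [japR, show (1:ℝ) + t^2 = |t|^2 + 1 by rw [sq_abs]; ring]
  have := abs_nonneg t
  rw [show |t|^2 + 1 = ((|t|+1))^2 - 2*|t| by ring]
  calc Real.sqrt ((|t|+1)^2 - 2*|t|) ≤ Real.sqrt ((|t|+1)^2) := by
        apply Real.sqrt_le_sqrt; nlinarith
    _ = 1 + |t| := by rw [Real.sqrt_sq (by linarith)]; ring

lemma one_le_japR (t : ℝ) : 1 ≤ japR t := by
  have h := Real.sqrt_le_sqrt (show (1:ℝ) ≤ 1 + t^2 by nlinarith [sq_nonneg t])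
  rw [japR]
  calc (1:ℝ) = Real.sqrt 1 := by rw [Real.sqrt_one]
    _ ≤ _ := h

lemma japR_pos (t : ℝ) : 0 < japR t := lt_of_lt_of_le one_pos (one_le_japR t)

lemma le_japR (t : ℝ) (ht : 0 ≤ t) : t ≤ japR t := by
  have h := Real.sqrt_le_sqrt (show t^2 ≤ 1 + t^2 by nlinarith)
  rwa [Real.sqrt_sq ht] at h

lemma log_bound {u : ℝ} (hu : 0 < u) (hu1 : u ≤ 1) : 1 - Real.log u ≤ 2 * u ^ (-(1:ℝ)/2) := by
  set s := u ^ (-(1:ℝ)/2) with hs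
  have hspos : 0 < s := Real.rpow_pos_of_pos hu _
  have hlogs : Real.log s = (-(1:ℝ)/2) * Real.log u := Real.log_rpow hu _
  have h1 : Real.log s ≤ s - 1 := Real.log_le_sub_one_of_pos hspos
  nlinarith [h1, hlogs]

lemma dominate {k : ℝ} (hk : k ≠ 0) :
    min (japR (Real.log |k|)) (|k| ^ (-(3 : ℝ))) ≤ Fb |k| := by
  have hk0 : 0 < |k| := abs_pos.mpr hk
  rw [Fb]
  by_cases h : |k| ≤ 1
  · rw [if_pos h]
    refine le_trans (min_le_left _ _) ?_
    refine le_trans (japR_le _) ?_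
    rw [abs_of_nonpos (Real.log_nonpos hk0.le h)]
    have := log_bound hk0 h
    linarith
  · rw [if_neg h]; exact min_le_right _ _

lemma Fb_nonneg {u : ℝ} (hu : 0 ≤ u) : 0 ≤ Fb u := by
  rw [Fb]; split <;> positivity

lemma Fb_eq_left : EqOn Fb (fun u : ℝ => 2 * u ^ (-(1:ℝ)/2)) (Ioc 0 1) := by
  intro u hu; rw [Fb, if_pos hu.2]

lemma Fb_eq_right : EqOn Fb (fun u : ℝ => u ^ (-(3:ℝ))) (Ioi 1) := by
  intro u hu; rw [Fb, if_neg (not_le.mpr hu)]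

lemma int_left : IntegrableOn (fun u : ℝ => 2 * u ^ (-(1:ℝ)/2)) (Ioc 0 1) := by
  have h : IntervalIntegrable (fun u : ℝ => u ^ (-(1:ℝ)/2)) volume 0 1 :=
    intervalIntegral.intervalIntegrable_rpow' (by norm_num)
  have h2 := h.const_mul 2
  rwa [intervalIntegrable_iff_integrableOn_Ioc_of_le zero_le_one] at h2

lemma val_left : (∫ u in Ioc (0:ℝ) 1, 2 * u ^ (-(1:ℝ)/2)) = 4 := by
  rw [← intervalIntegral.integral_of_le zero_le_one, intervalIntegral.integral_const_mul,
    integral_rpow (Or.inl (by norm_num))]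
  rw [show -(1:ℝ)/2 + 1 = 1/2 by norm_num, Real.one_rpow, Real.zero_rpow (by norm_num)]
  norm_num

lemma int_right : IntegrableOn (fun u : ℝ => u ^ (-(3:ℝ))) (Ioi 1) :=
  integrableOn_Ioi_rpow_of_lt (by norm_num) one_pos

lemma val_right : (∫ u in Ioi (1:ℝ), u ^ (-(3:ℝ))) = 1/2 := by
  rw [integral_Ioi_rpow_of_lt (by norm_num) one_pos]
  rw [Real.one_rpow]; norm_num

lemma int_Fb : IntegrableOn Fb (Ioi 0) := by
  rw [← Ioc_union_Ioi_eq_Ioi zero_le_one]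
  exact (int_left.congr_fun (fun u hu => (Fb_eq_left hu).symm) measurableSet_Ioc).union
    (int_right.congr_fun (fun u hu => (Fb_eq_right hu).symm) measurableSet_Ioi)

lemma val_Fb : (∫ u in Ioi (0:ℝ), Fb u) ≤ 5 := by
  rw [← Ioc_union_Ioi_eq_Ioi zero_le_one,
    setIntegral_union (Ioc_disjoint_Ioi le_rfl) measurableSet_Ioi
      (int_left.congr_fun (fun u hu => (Fb_eq_left hu).symm) measurableSet_Ioc)
      (int_right.congr_fun (fun u hu => (Fb_eq_right hu).symm) measurableSet_Ioi),
    setIntegral_congr_fun measurableSet_Ioc Fb_eq_left,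
    setIntegral_congr_fun measurableSet_Ioi Fb_eq_right, val_left, val_right]
  norm_num


lemma mulFb_eq_left : EqOn (fun u => u * Fb u) (fun u : ℝ => 2 * u ^ ((1:ℝ)/2)) (Ioc 0 1) := by
  intro u hu
  simp only [Fb_eq_left hu]
  rw [show u * (2 * u ^ (-(1:ℝ)/2)) = 2 * (u ^ (1:ℝ) * u ^ (-(1:ℝ)/2)) by
    rw [Real.rpow_one]; ring, ← Real.rpow_add hu.1]
  norm_num

lemma mulFb_eq_right : EqOn (fun u => u * Fb u) (fun u : ℝ => u ^ (-(2:ℝ))) (Ioi 1) := by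
  intro u hu
  simp only [Fb_eq_right hu]
  rw [show u * u ^ (-(3:ℝ)) = u ^ (1:ℝ) * u ^ (-(3:ℝ)) by rw [Real.rpow_one],
    ← Real.rpow_add (lt_trans one_pos hu)]
  norm_num

lemma int_mul_left : IntegrableOn (fun u : ℝ => 2 * u ^ ((1:ℝ)/2)) (Ioc 0 1) := by
  have h := (intervalIntegral.intervalIntegrable_rpow' (a := (0:ℝ)) (b := 1) (r := (1:ℝ)/2) (by norm_num)).const_mul 2
  rwa [intervalIntegrable_iff_integrableOn_Ioc_of_le zero_le_one] at h

lemma val_mul_left : (∫ u in Ioc (0:ℝ) 1, 2 * u ^ ((1:ℝ)/2)) = 4/3 := by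
  rw [← intervalIntegral.integral_of_le zero_le_one, intervalIntegral.integral_const_mul,
    integral_rpow (Or.inl (by norm_num))]
  rw [show (1:ℝ)/2 + 1 = 3/2 by norm_num, Real.one_rpow, Real.zero_rpow (by norm_num)]
  norm_num

lemma int_mul_right : IntegrableOn (fun u : ℝ => u ^ (-(2:ℝ))) (Ioi 1) :=
  integrableOn_Ioi_rpow_of_lt (by norm_num) one_pos

lemma val_mul_right : (∫ u in Ioi (1:ℝ), u ^ (-(2:ℝ))) = 1 := by
  rw [integral_Ioi_rpow_of_lt (by norm_num) one_pos, Real.one_rpow]; norm_num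

lemma int_mulFb : IntegrableOn (fun u => u * Fb u) (Ioi 0) := by
  rw [← Ioc_union_Ioi_eq_Ioi zero_le_one]
  exact (int_mul_left.congr_fun (fun u hu => (mulFb_eq_left hu).symm) measurableSet_Ioc).union
    (int_mul_right.congr_fun (fun u hu => (mulFb_eq_right hu).symm) measurableSet_Ioi)

lemma val_mulFb : (∫ u in Ioi (0:ℝ), u * Fb u) ≤ 5 := by
  rw [← Ioc_union_Ioi_eq_Ioi zero_le_one,
    setIntegral_union (Ioc_disjoint_Ioi le_rfl) measurableSet_Ioi
      (int_mul_left.congr_fun (fun u hu => (mulFb_eq_left hu).symm) measurableSet_Ioc)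
      (int_mul_right.congr_fun (fun u hu => (mulFb_eq_right hu).symm) measurableSet_Ioi),
    setIntegral_congr_fun measurableSet_Ioc mulFb_eq_left,
    setIntegral_congr_fun measurableSet_Ioi mulFb_eq_right, val_mul_left, val_mul_right]
  norm_num

lemma integrable_comp_abs' {f : ℝ → ℝ} (hf : IntegrableOn f (Ioi 0)) :
    Integrable (fun x => f |x|) := by
  have hIoi : IntegrableOn (fun x => f |x|) (Ioi 0) :=
    hf.congr_fun (fun x hx => by rw [abs_of_pos hx]) measurableSet_Ioi |>.congr_fun
      (fun x hx => rfl) measurableSet_Ioi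
  have hIci : IntegrableOn (fun x => f |x|) (Ici 0) :=
    (integrableOn_Ici_iff_integrableOn_Ioi).mpr hIoi
  have hIic : IntegrableOn (fun x => f |x|) (Iic 0) := by
    rw [IntegrableOn, ← Measure.map_neg_eq_self (volume : Measure ℝ)]
    have m : MeasurableEmbedding fun x : ℝ => -x := (Homeomorph.neg ℝ).measurableEmbedding
    rw [Measure.restrict_map m.measurable (by exact measurableSet_Iic)]
    rw [m.integrable_map_iff]
    simp only [Function.comp_def, abs_neg]
    have : (fun x : ℝ => -x) ⁻¹' (Iic 0) = Ici 0 := by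
      ext x; simp
    rw [this]
    exact hIci
  have h := hIic.union hIoi
  rwa [Iic_union_Ioi, integrableOn_univ] at h

lemma int_shift_sq {a : ℝ} (ha : 0 < a) :
    IntegrableOn (fun r : ℝ => ((a + r)^2)⁻¹) (Ioi 0) ∧
    (∫ r in Ioi (0:ℝ), ((a + r)^2)⁻¹) = a⁻¹ := by
  have hderiv : ∀ x ∈ Ioi (0:ℝ), HasDerivAt (fun x : ℝ => -(a + x)⁻¹) (((a + x)^2)⁻¹) x := by
    intro x hx
    have hx' : (0:ℝ) < x := hx
    have h0 : a + x ≠ 0 := by positivity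
    have h1 : HasDerivAt (fun x : ℝ => a + x) 1 x :=
      (hasDerivAt_id x).const_add a
    have h2 := (h1.inv h0).neg
    exact h2.congr_deriv (by ring)
  have hcont : ContinuousWithinAt (fun x : ℝ => -(a + x)⁻¹) (Ici 0) 0 := by
    have : ContinuousAt (fun x : ℝ => -(a + x)⁻¹) 0 := by
      have h0 : a + (0:ℝ) ≠ 0 := by positivity
      exact ((continuousAt_const.add continuousAt_id).inv₀ h0).neg
    exact this.continuousWithinAt
  have htend : Tendsto (fun x : ℝ => -(a + x)⁻¹) atTop (nhds 0) := by
    rw [show (0:ℝ) = -0 by norm_num]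
    apply Tendsto.neg
    exact tendsto_inv_atTop_zero.comp (tendsto_atTop_add_const_left _ a tendsto_id)
  have hnn : ∀ x ∈ Ioi (0:ℝ), 0 ≤ ((a + x)^2)⁻¹ := fun x _ => by positivity
  have hint : IntegrableOn (fun r : ℝ => ((a + r)^2)⁻¹) (Ioi 0) :=
    integrableOn_Ioi_deriv_of_nonneg hcont hderiv hnn htend
  refine ⟨hint, ?_⟩
  rw [integral_Ioi_of_hasDerivAt_of_tendsto hcont hderiv hint htend]
  simp

lemma int_psi :
    IntegrableOn (fun r : ℝ => if r ≤ 2 then (6:ℝ) else r ^ (-(2:ℝ))) (Ioi 0) ∧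
    (∫ r in Ioi (0:ℝ), if r ≤ 2 then (6:ℝ) else r ^ (-(2:ℝ))) ≤ 13 := by
  have e1 : EqOn (fun r : ℝ => if r ≤ 2 then (6:ℝ) else r ^ (-(2:ℝ))) (fun _ => (6:ℝ))
      (Ioc 0 2) := fun r hr => by simp [if_pos hr.2]
  have e2 : EqOn (fun r : ℝ => if r ≤ 2 then (6:ℝ) else r ^ (-(2:ℝ)))
      (fun r : ℝ => r ^ (-(2:ℝ))) (Ioi 2) := fun r hr => by
    simp [if_neg (not_le.mpr (show (2:ℝ) < r from hr))]
  have i1 : IntegrableOn (fun _ : ℝ => (6:ℝ)) (Ioc 0 2) := integrableOn_const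
    (by rw [Real.volume_Ioc]; exact ENNReal.ofReal_ne_top)
  have i2 : IntegrableOn (fun r : ℝ => r ^ (-(2:ℝ))) (Ioi 2) :=
    integrableOn_Ioi_rpow_of_lt (by norm_num) two_pos
  have i1' := i1.congr_fun (fun u hu => (e1 hu).symm) measurableSet_Ioc
  have i2' := i2.congr_fun (fun u hu => (e2 hu).symm) measurableSet_Ioi
  constructor
  · rw [← Ioc_union_Ioi_eq_Ioi (by norm_num : (0:ℝ) ≤ 2)]
    exact i1'.union i2'
  · rw [← Ioc_union_Ioi_eq_Ioi (by norm_num : (0:ℝ) ≤ 2),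
      setIntegral_union (Ioc_disjoint_Ioi le_rfl) measurableSet_Ioi i1' i2',
      setIntegral_congr_fun measurableSet_Ioc e1,
      setIntegral_congr_fun measurableSet_Ioi e2,
      integral_Ioi_rpow_of_lt (by norm_num) two_pos]
    rw [setIntegral_const]
    rw [Real.volume_real_Ioc_of_le (by norm_num)]
    rw [show (2:ℝ) - 0 = 2 by norm_num]
    rw [show (-(2:ℝ) + 1) = -1 by norm_num]
    rw [Real.rpow_neg_one]
    norm_num


theorem stmt15 :
    ∃ C : ℝ, ∀ g : ℝ → ℂ, Measurable g →
      (∀ k : ℝ, k ≠ 0 → ‖g k‖ ≤ min (japR (Real.log |k|)) (|k| ^ (-(3 : ℝ)))) →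
      ∀ a : ℝ, 0 ≤ a →
        (∫ r in Set.Ioi (0 : ℝ), r * ‖g (a + r)‖) ≤ C / japR a ∧
        (∫ r in Set.Ioi (0 : ℝ), r * ‖g (a - r)‖) ≤ C * japR a := by
  use 100
  intro g hgm hbound a ha
  constructor
  · -- part (i)
    rcases le_or_gt a 1 with ha1 | ha1
    · -- a ≤ 1
      obtain ⟨hΨint, hΨval⟩ := int_psi
      have hmono : (∫ r in Ioi (0:ℝ), r * ‖g (a + r)‖)
          ≤ ∫ r in Ioi (0:ℝ), (if r ≤ 2 then (6:ℝ) else r ^ (-(2:ℝ))) := by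
        apply integral_mono_of_nonneg
        · filter_upwards [ae_restrict_mem measurableSet_Ioi] with r hr
          exact mul_nonneg (le_of_lt hr) (norm_nonneg _)
        · exact hΨint
        · filter_upwards [ae_restrict_mem measurableSet_Ioi] with r hr
          have hr0 : (0:ℝ) < r := hr
          have hk : 0 < a + r := by linarith
          have hb := hbound (a + r) (ne_of_gt hk)
          rw [abs_of_pos hk] at hb
          by_cases h2 : r ≤ 2
          · rw [if_pos h2]
            by_cases hk1 : a + r ≤ 1
            · have h3 : ‖g (a+r)‖ ≤ 2 * (a+r) ^ (-(1:ℝ)/2) := by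
                refine le_trans (le_trans hb (min_le_left _ _)) ?_
                refine le_trans (japR_le _) ?_
                rw [abs_of_nonpos (Real.log_nonpos hk.le hk1)]
                linarith [log_bound hk hk1]
              have h4 : (a+r) ^ (-(1:ℝ)/2) ≤ r ^ (-(1:ℝ)/2) :=
                Real.rpow_le_rpow_of_nonpos hr0 (by linarith) (by norm_num)
              have h5 : r * ‖g (a+r)‖ ≤ r * (2 * r ^ (-(1:ℝ)/2)) := by
                apply mul_le_mul_of_nonneg_left _ hr0.le
                linarith
              have h6 : r * (2 * r ^ (-(1:ℝ)/2)) = 2 * r ^ ((1:ℝ)/2) := by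
                rw [show r * (2 * r ^ (-(1:ℝ)/2)) = 2 * (r ^ (1:ℝ) * r ^ (-(1:ℝ)/2)) by
                  rw [Real.rpow_one]; ring, ← Real.rpow_add hr0]
                norm_num
              have h7 : r ^ ((1:ℝ)/2) ≤ 2 ^ ((1:ℝ)/2) :=
                Real.rpow_le_rpow hr0.le h2 (by norm_num)
              have h8 : (2:ℝ) ^ ((1:ℝ)/2) ≤ 2 ^ (1:ℝ) :=
                Real.rpow_le_rpow_of_exponent_le one_le_two (by norm_num)
              rw [Real.rpow_one] at h8
              rw [h6] at h5
              linarith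
            · push_neg at hk1
              have hlog : Real.log (a+r) ≤ a + r - 1 := Real.log_le_sub_one_of_pos hk
              have h3 : ‖g (a+r)‖ ≤ 3 := by
                refine le_trans (le_trans hb (min_le_left _ _)) (le_trans (japR_le _) ?_)
                rw [abs_of_nonneg (Real.log_nonneg hk1.le)]
                linarith
              nlinarith [norm_nonneg (g (a+r))]
          · rw [if_neg h2]
            push_neg at h2
            have h3 : ‖g (a+r)‖ ≤ (a+r) ^ (-(3:ℝ)) := le_trans hb (min_le_right _ _)
            have h4 : (a+r) ^ (-(3:ℝ)) ≤ r ^ (-(3:ℝ)) :=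
              Real.rpow_le_rpow_of_nonpos hr0 (by linarith) (by norm_num)
            have h5 : r * r ^ (-(3:ℝ)) = r ^ (-(2:ℝ)) := by
              rw [show r * r ^ (-(3:ℝ)) = r ^ (1:ℝ) * r ^ (-(3:ℝ)) by rw [Real.rpow_one],
                ← Real.rpow_add hr0]
              norm_num
            calc r * ‖g (a+r)‖ ≤ r * r ^ (-(3:ℝ)) := by
                  apply mul_le_mul_of_nonneg_left (le_trans h3 h4) hr0.le
              _ = r ^ (-(2:ℝ)) := h5
      refine le_trans (le_trans hmono hΨval) ?_
      rw [le_div_iff₀ (japR_pos a)]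
      have hja := japR_le a
      rw [abs_of_nonneg ha] at hja
      nlinarith [japR_pos a]
    · -- 1 < a
      obtain ⟨hint, hval⟩ := int_shift_sq (lt_trans one_pos ha1)
      have hmono : (∫ r in Ioi (0:ℝ), r * ‖g (a + r)‖)
          ≤ ∫ r in Ioi (0:ℝ), ((a + r)^2)⁻¹ := by
        apply integral_mono_of_nonneg
        · filter_upwards [ae_restrict_mem measurableSet_Ioi] with r hr
          exact mul_nonneg (le_of_lt hr) (norm_nonneg _)
        · exact hint
        · filter_upwards [ae_restrict_mem measurableSet_Ioi] with r hr
          have hr0 : (0:ℝ) < r := hr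
          have hk : 0 < a + r := by linarith
          have hb := le_trans (hbound (a + r) (ne_of_gt hk)) (min_le_right _ _)
          rw [abs_of_pos hk] at hb
          have e : (a+r) ^ (-(3:ℝ)) = ((a+r)^3)⁻¹ := by
            rw [Real.rpow_neg hk.le, show (3:ℝ) = ((3:ℕ):ℝ) by norm_num,
              Real.rpow_natCast]
          rw [e] at hb
          have e2 : (a+r) * ((a+r)^3)⁻¹ = ((a+r)^2)⁻¹ := by
            field_simp
          calc r * ‖g (a+r)‖ ≤ (a+r) * ((a+r)^3)⁻¹ := by
                apply mul_le_mul (by linarith) hb (norm_nonneg _) hk.le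
            _ = ((a+r)^2)⁻¹ := e2
      refine le_trans (le_trans hmono (le_of_eq hval)) ?_
      rw [inv_eq_one_div, div_le_div_iff₀ (by linarith) (japR_pos a)]
      have hja := japR_le a
      rw [abs_of_nonneg ha] at hja
      nlinarith
  · -- part (ii)
    set f : ℝ → ℝ := fun u => (a + u) * Fb u with hf_def
    have hfeq : f = fun u => a * Fb u + u * Fb u := by
      funext u; simp only [hf_def]; ring
    have hfint : IntegrableOn f (Ioi 0) := by
      rw [hfeq]; exact (int_Fb.const_mul a).add int_mulFb
    have hfval : (∫ u in Ioi (0:ℝ), f u) ≤ 5*a + 5 := by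
      rw [hfeq, integral_add (int_Fb.const_mul a) int_mulFb, MeasureTheory.integral_const_mul]
      have h1 := val_Fb
      have h2 := val_mulFb
      nlinarith
    have habs : Integrable (fun x => f |x|) := integrable_comp_abs' hfint
    have hcomp : Integrable (fun r => f |a - r|) := habs.comp_sub_left a
    have hnn_f : ∀ x : ℝ, 0 ≤ f |x| := fun x =>
      mul_nonneg (add_nonneg ha (abs_nonneg x)) (Fb_nonneg (abs_nonneg x))
    calc (∫ r in Ioi (0:ℝ), r * ‖g (a - r)‖)
        ≤ ∫ r in Ioi (0:ℝ), f |a - r| := by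
          apply integral_mono_of_nonneg
          · filter_upwards [ae_restrict_mem measurableSet_Ioi] with r hr
            exact mul_nonneg (le_of_lt hr) (norm_nonneg _)
          · exact hcomp.integrableOn
          · have hne : ∀ᵐ r ∂(volume.restrict (Ioi (0:ℝ))), r ≠ a := by
              apply ae_restrict_of_ae
              refine ae_iff.mpr ?_
              have : {x : ℝ | ¬ x ≠ a} = {a} := by ext x; simp
              rw [this]
              exact Real.volume_singleton
            filter_upwards [ae_restrict_mem measurableSet_Ioi, hne] with r hr hra
            have hk : a - r ≠ 0 := fun h => hra (by linarith [sub_eq_zero.mp h])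
            have hb := le_trans (hbound _ hk) (dominate hk)
            have hr' : r ≤ a + |a - r| := by
              have h := le_abs_self (r - a)
              rw [abs_sub_comm] at h
              linarith
            exact mul_le_mul hr' hb (norm_nonneg _) (add_nonneg ha (abs_nonneg _))
      _ ≤ ∫ r, f |a - r| :=
          setIntegral_le_integral hcomp (Eventually.of_forall (fun r => hnn_f _))
      _ = ∫ x, f |x| := integral_sub_left_eq_self (fun x => f |x|) volume a
      _ = 2 * ∫ u in Ioi (0:ℝ), f u := integral_comp_abs (f := f)
      _ ≤ 2 * (5*a+5) := by linarith
      _ ≤ 100 * japR a := by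
          have h1 := one_le_japR a
          have h2 := le_japR a ha
          nlinarith
end
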